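/- Let (f_n)_{n∈ℕ} be an injective sequence in C[0,1] whose image is an IC-dense set, and let (g_n)_{n∈ℕ} be an injective sequence in C[0,1] whose image is a smoothly dense set, every element of which is the restriction to [0,1] of a real polynomial function. Then there is no bijection π : ℕ → ℕ such that ⌊‖f_i − f_j‖⌋ = ⌊‖g_{π(i)} − g_{π(j)}‖⌋ for all i, j. (This is the deterministic core of the paper's Corollary 4.5, that the graphs GR(ICD) and GR(SD) are non-isomorphic.) -/

import Mathlib

open Set unitInterval

noncomputable section

/-- The crossing set of two continuous functions on `[0,1]`: points where the
fractional parts agree. -/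
def cr (f g : C(unitInterval, ℝ)) : Set unitInterval :=
  {x | Int.fract (f x) = Int.fract (g x)}

/-- The crossing sets of distinct (unordered) pairs from `V` are pairwise disjoint. -/
def PairwiseDisjointCr (V : Set C(unitInterval, ℝ)) : Prop :=
  ∀ f g f' g' : C(unitInterval, ℝ), f ∈ V → g ∈ V → f' ∈ V → g' ∈ V →
    f ≠ g → f' ≠ g' → ({f, g} : Set C(unitInterval, ℝ)) ≠ {f', g'} →
    Disjoint (cr f g) (cr f' g')

/-- A transverse subset of `C[0,1]`. -/
def Transverse (V : Set C(unitInterval, ℝ)) : Prop :=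
  PairwiseDisjointCr V ∧
  ∀ f g : C(unitInterval, ℝ), f ∈ V → g ∈ V → f ≠ g →
    (cr f g).Finite ∧ (0 : unitInterval) ∉ cr f g ∧ (1 : unitInterval) ∉ cr f g ∧
    ∀ x ∈ cr f g, ¬ IsLocalExtr (fun t : unitInterval => f t - g t) x

/-- `A ∼_ε B` : the sets `A` and `B` have the same cardinality and their increasing
enumerations agree to within `ε`; equivalently, there is an order isomorphism
moving no point by more than `ε`. -/
def ApproxEq (ε : ℝ) (A B : Set unitInterval) : Prop :=
  ∃ e : A ≃o B, ∀ a : A, |((e a : unitInterval) : ℝ) - ((a : unitInterval) : ℝ)| ≤ ε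

/-- A smoothly dense subset of `C[0,1]`. -/
def SmoothlyDense (V : Set C(unitInterval, ℝ)) : Prop :=
  V.Countable ∧ Dense V ∧ Transverse V ∧
  (∀ f ∈ V, ∃ K : NNReal, LipschitzWith K f) ∧
  ∀ F : Finset C(unitInterval, ℝ), ↑F ⊆ V →
    ∀ f : C(unitInterval, ℝ), Transverse (insert f (↑F : Set C(unitInterval, ℝ))) →
    ∀ ε : ℝ, 0 < ε →
      ∃ g ∈ V, ‖f - g‖ < ε ∧ ∀ h ∈ F, ApproxEq ε (cr f h) (cr g h)

/-- An infinite crossing dense (IC-dense) subset of `C[0,1]`. -/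
def ICDense (V : Set C(unitInterval, ℝ)) : Prop :=
  V.Countable ∧ Dense V ∧ PairwiseDisjointCr V ∧
  (∀ f g : C(unitInterval, ℝ), f ∈ V → g ∈ V → f ≠ g →
    (0 : unitInterval) ∉ cr f g ∧ (1 : unitInterval) ∉ cr f g) ∧
  ∀ f g : C(unitInterval, ℝ), f ∈ V → g ∈ V → f ≠ g →
    ∀ x : unitInterval, (x : ℝ) ∈ Set.Ioo (0 : ℝ) 1 →
      Int.fract (f x) = Int.fract (g x) →
      ∃ u : ℕ → unitInterval,
        (Monotone u ∨ Antitone u) ∧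
        Filter.Tendsto u Filter.atTop (nhds x) ∧
        ∀ n : ℕ,
          Int.fract (f (u (2 * n))) < Int.fract (g (u (2 * n))) ∧
          Int.fract (g (u (2 * n + 1))) < Int.fract (f (u (2 * n + 1)))

namespace StepIsoAux

abbrev X := C(unitInterval, ℝ)


/-- The sup of `|φ|` is attained. -/
lemma exists_abs_eq_norm (φ : X) : ∃ x : unitInterval, |φ x| = ‖φ‖ := by
  obtain ⟨x, -, hx⟩ := isCompact_univ.exists_isMaxOn (univ_nonempty)
      ((continuous_abs.comp (map_continuous φ)).continuousOn)
  refine ⟨x, le_antisymm ?_ ?_⟩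
  · simpa using φ.norm_coe_le_norm x
  · rw [show ‖φ‖ = ‖φ‖ from rfl]
    refine (φ.norm_le (abs_nonneg _)).mpr (fun y => ?_)
    simpa using hx (mem_univ y)

lemma norm_lt_of_floor_le {φ : X} {a : ℤ} (h : ⌊‖φ‖⌋ ≤ a) : ‖φ‖ < (a : ℝ) + 1 := by
  have := Int.lt_floor_add_one ‖φ‖
  have : ‖φ‖ < (⌊‖φ‖⌋ : ℝ) + 1 := this
  have h' : ((⌊‖φ‖⌋ : ℤ) : ℝ) ≤ (a : ℝ) := by exact_mod_cast h
  linarith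

lemma floor_le_of_norm_lt {φ : X} {a : ℤ} (h : ‖φ‖ < (a : ℝ) + 1) : ⌊‖φ‖⌋ ≤ a := by
  have : ⌊‖φ‖⌋ < a + 1 := Int.floor_lt.mpr (by push_cast; linarith)
  omega

lemma apply_abs_le (φ : X) (x : unitInterval) : |φ x| ≤ ‖φ‖ := by
  simpa using φ.norm_coe_le_norm x

/-- Obstruction: a two-point pattern forces a (strict) envelope inequality at the
point where `‖z₁ - z₂‖` is attained. -/
lemma obstruct (z₁ z₂ : X) (u v : Fin 3 → X) (a b : Fin 3 → ℤ) (m : ℤ)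
    (h₁ : ∀ i, ⌊‖z₁ - u i‖⌋ ≤ a i) (h₂ : ∀ j, ⌊‖z₂ - v j‖⌋ ≤ b j)
    (h₃ : m ≤ ⌊‖z₁ - z₂‖⌋) :
    (∃ x : unitInterval, ∀ i j, ((m : ℝ) - a i - b j - 2) < u i x - v j x) ∨
    (∃ x : unitInterval, ∀ i j, ((m : ℝ) - a i - b j - 2) < v j x - u i x) := by
  obtain ⟨x₀, hx₀⟩ := exists_abs_eq_norm (z₁ - z₂)
  have hm : (m : ℝ) ≤ |(z₁ - z₂) x₀| := by
    rw [hx₀]; exact Int.le_floor.mp h₃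
  have hu : ∀ i, |z₁ x₀ - u i x₀| < (a i : ℝ) + 1 := by
    intro i
    have := apply_abs_le (z₁ - u i) x₀
    have h2 := norm_lt_of_floor_le (h₁ i)
    simp only [ContinuousMap.sub_apply] at this
    linarith
  have hv : ∀ j, |z₂ x₀ - v j x₀| < (b j : ℝ) + 1 := by
    intro j
    have := apply_abs_le (z₂ - v j) x₀
    have h2 := norm_lt_of_floor_le (h₂ j)
    simp only [ContinuousMap.sub_apply] at this
    linarith
  simp only [ContinuousMap.sub_apply] at hm
  rcases abs_cases (z₁ x₀ - z₂ x₀) with ⟨heq, -⟩ | ⟨heq, -⟩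
  · left
    refine ⟨x₀, fun i j => ?_⟩
    have hui := (abs_lt.mp (hu i)).2
    have hvj := (abs_lt.mp (hv j)).1
    rw [heq] at hm
    linarith
  · right
    refine ⟨x₀, fun i j => ?_⟩
    have hui := (abs_lt.mp (hu i)).1
    have hvj := (abs_lt.mp (hv j)).2
    rw [heq] at hm
    linarith





/-- Realization: if the envelope inequality holds at some point, the two-point
pattern can be realized inside any dense range. -/
lemma realize (s : ℕ → X) (hs : DenseRange s)
    (u v : Fin 3 → X) (a b : Fin 3 → ℤ) (m : ℤ)
    (ha : ∀ i, 0 ≤ a i) (hb : ∀ j, 0 ≤ b j)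
    (hu : ∀ i i', ‖u i - u i'‖ < (a i : ℝ) + a i' + 2)
    (hv : ∀ j j', ‖v j - v j'‖ < (b j : ℝ) + b j' + 2)
    (x : unitInterval)
    (hx : ∀ i j, ((m : ℝ) - a i - b j - 2) < u i x - v j x) :
    ∃ n₁ n₂ : ℕ, (∀ i, ⌊‖s n₁ - u i‖⌋ ≤ a i) ∧ (∀ j, ⌊‖s n₂ - v j‖⌋ ≤ b j) ∧
      m ≤ ⌊‖s n₁ - s n₂‖⌋ := by
  -- margins
  obtain ⟨pθ, -, hpθ⟩ := Finset.exists_min_image (Finset.univ : Finset (Fin 3 × Fin 3))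
    (fun p => u p.1 x - v p.2 x - ((m : ℝ) - a p.1 - b p.2 - 2)) ⟨(0,0), Finset.mem_univ _⟩
  set θ : ℝ := u pθ.1 x - v pθ.2 x - ((m : ℝ) - a pθ.1 - b pθ.2 - 2) with hθdef
  have hθpos : 0 < θ := by have := hx pθ.1 pθ.2; simp [hθdef]; linarith
  have hθle : ∀ i j, θ ≤ u i x - v j x - ((m : ℝ) - a i - b j - 2) := by
    intro i j; exact hpθ (i, j) (Finset.mem_univ _)
  obtain ⟨pε, -, hpε⟩ := Finset.exists_min_image (Finset.univ : Finset (Fin 3 × Fin 3))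
    (fun p => (a p.1 : ℝ) + a p.2 + 2 - ‖u p.1 - u p.2‖) ⟨(0,0), Finset.mem_univ _⟩
  set ε₁ : ℝ := (a pε.1 : ℝ) + a pε.2 + 2 - ‖u pε.1 - u pε.2‖ with hε₁def
  have hε₁pos : 0 < ε₁ := by have := hu pε.1 pε.2; simp [hε₁def]; linarith
  have hε₁le : ∀ i i', ‖u i - u i'‖ ≤ (a i : ℝ) + a i' + 2 - ε₁ := by
    intro i i'; have := hpε (i, i') (Finset.mem_univ _); simp at this ⊢; linarith
  obtain ⟨pε', -, hpε'⟩ := Finset.exists_min_image (Finset.univ : Finset (Fin 3 × Fin 3))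
    (fun p => (b p.1 : ℝ) + b p.2 + 2 - ‖v p.1 - v p.2‖) ⟨(0,0), Finset.mem_univ _⟩
  set ε₂ : ℝ := (b pε'.1 : ℝ) + b pε'.2 + 2 - ‖v pε'.1 - v pε'.2‖ with hε₂def
  have hε₂pos : 0 < ε₂ := by have := hv pε'.1 pε'.2; simp [hε₂def]; linarith
  have hε₂le : ∀ j j', ‖v j - v j'‖ ≤ (b j : ℝ) + b j' + 2 - ε₂ := by
    intro j j'; have := hpε' (j, j') (Finset.mem_univ _); simp at this ⊢; linarith
  set η : ℝ := min (min (θ/4) (1/2)) (min ε₁ ε₂ / 2) with hηdef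
  have hηpos : 0 < η := by
    refine lt_min (lt_min (by linarith) (by norm_num)) (by positivity)
  have hηθ : η ≤ θ/4 := le_trans (min_le_left _ _) (min_le_left _ _)
  have hηhalf : η ≤ 1/2 := le_trans (min_le_left _ _) (min_le_right _ _)
  have hηε₁ : η ≤ ε₁/2 := le_trans (min_le_right _ _) (by
    have : min ε₁ ε₂ ≤ ε₁ := min_le_left _ _; linarith)
  have hηε₂ : η ≤ ε₂/2 := le_trans (min_le_right _ _) (by
    have : min ε₁ ε₂ ≤ ε₂ := min_le_right _ _; linarith)
  -- envelopes
  set ζ₁ : X := ContinuousMap.mk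
      (fun y => min (min (u 0 y + ((a 0 : ℝ) + 1)) (u 1 y + ((a 1 : ℝ) + 1)))
        (u 2 y + ((a 2 : ℝ) + 1)) - η)
      (by
        refine Continuous.sub ?_ continuous_const
        exact (((map_continuous (u 0)).add continuous_const).min
          ((map_continuous (u 1)).add continuous_const)).min
          ((map_continuous (u 2)).add continuous_const)) with hζ₁def
  set ζ₂ : X := ContinuousMap.mk
      (fun y => max (max (v 0 y - ((b 0 : ℝ) + 1)) (v 1 y - ((b 1 : ℝ) + 1)))
        (v 2 y - ((b 2 : ℝ) + 1)) + η)
      (by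
        refine Continuous.add ?_ continuous_const
        exact (((map_continuous (v 0)).sub continuous_const).max
          ((map_continuous (v 1)).sub continuous_const)).max
          ((map_continuous (v 2)).sub continuous_const)) with hζ₂def
  -- pointwise bounds
  have hmin3 : ∀ (y : unitInterval) (i : Fin 3),
      min (min (u 0 y + ((a 0 : ℝ) + 1)) (u 1 y + ((a 1 : ℝ) + 1))) (u 2 y + ((a 2 : ℝ) + 1))
        ≤ u i y + ((a i : ℝ) + 1) := by
    intro y i
    fin_cases i
    · exact le_trans (min_le_left _ _) (min_le_left _ _)
    · exact le_trans (min_le_left _ _) (min_le_right _ _)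
    · exact min_le_right _ _
  have hmax3 : ∀ (y : unitInterval) (j : Fin 3),
      v j y - ((b j : ℝ) + 1) ≤
      max (max (v 0 y - ((b 0 : ℝ) + 1)) (v 1 y - ((b 1 : ℝ) + 1))) (v 2 y - ((b 2 : ℝ) + 1)) := by
    intro y j
    fin_cases j
    · exact le_trans (le_max_left _ _) (le_max_left _ _)
    · exact le_trans (le_max_right _ _) (le_max_left _ _)
    · exact le_max_right _ _
  have happrox : ∀ (i i' : Fin 3) (y : unitInterval),
      u i y - u i' y ≤ (a i : ℝ) + a i' + 2 - ε₁ := by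
    intro i i' y
    have h1 := apply_abs_le (u i - u i') y
    have h2 := hε₁le i i'
    simp only [ContinuousMap.sub_apply] at h1
    have := le_trans (le_abs_self _) h1
    linarith
  have happroxv : ∀ (j j' : Fin 3) (y : unitInterval),
      v j y - v j' y ≤ (b j : ℝ) + b j' + 2 - ε₂ := by
    intro j j' y
    have h1 := apply_abs_le (v j - v j') y
    have h2 := hε₂le j j'
    simp only [ContinuousMap.sub_apply] at h1
    have := le_trans (le_abs_self _) h1
    linarith
  -- ζ₁ distance bounds
  have hζ₁bd : ∀ i : Fin 3, ‖ζ₁ - u i‖ ≤ (a i : ℝ) + 1 - η := by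
    intro i
    refine ((ζ₁ - u i).norm_le (by
      have := ha i; have : (0:ℝ) ≤ (a i : ℝ) := by exact_mod_cast this
      linarith)).mpr (fun y => ?_)
    simp only [ContinuousMap.sub_apply]
    rw [Real.norm_eq_abs, abs_le]
    constructor
    · -- u i y - ζ₁ y ≤ a i + 1 - η  i.e.  -(a i + 1 - η) ≤ ζ₁ y - u i y
      have hlow : ∀ i' : Fin 3, u i y - ((a i : ℝ) + 1) + ε₁ ≤ u i' y + ((a i' : ℝ) + 1) := by
        intro i'
        have := happrox i i' y
        linarith
      have : u i y - ((a i : ℝ) + 1) + ε₁ ≤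
          min (min (u 0 y + ((a 0 : ℝ) + 1)) (u 1 y + ((a 1 : ℝ) + 1)))
            (u 2 y + ((a 2 : ℝ) + 1)) :=
        le_min (le_min (hlow 0) (hlow 1)) (hlow 2)
      have hζy : ζ₁ y = min (min (u 0 y + ((a 0 : ℝ) + 1)) (u 1 y + ((a 1 : ℝ) + 1)))
            (u 2 y + ((a 2 : ℝ) + 1)) - η := rfl
      rw [hζy]
      linarith
    · have := hmin3 y i
      have hζy : ζ₁ y = min (min (u 0 y + ((a 0 : ℝ) + 1)) (u 1 y + ((a 1 : ℝ) + 1)))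
            (u 2 y + ((a 2 : ℝ) + 1)) - η := rfl
      rw [hζy]
      linarith
  have hζ₂bd : ∀ j : Fin 3, ‖ζ₂ - v j‖ ≤ (b j : ℝ) + 1 - η := by
    intro j
    refine ((ζ₂ - v j).norm_le (by
      have := hb j; have : (0:ℝ) ≤ (b j : ℝ) := by exact_mod_cast this
      linarith)).mpr (fun y => ?_)
    simp only [ContinuousMap.sub_apply]
    rw [Real.norm_eq_abs, abs_le]
    have hζy : ζ₂ y = max (max (v 0 y - ((b 0 : ℝ) + 1)) (v 1 y - ((b 1 : ℝ) + 1)))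
          (v 2 y - ((b 2 : ℝ) + 1)) + η := rfl
    constructor
    · have := hmax3 y j
      rw [hζy]
      linarith
    · have hhigh : ∀ j' : Fin 3, v j' y - ((b j' : ℝ) + 1) ≤ v j y + ((b j : ℝ) + 1) - ε₂ := by
        intro j'
        have := happroxv j' j y
        linarith
      have : max (max (v 0 y - ((b 0 : ℝ) + 1)) (v 1 y - ((b 1 : ℝ) + 1)))
            (v 2 y - ((b 2 : ℝ) + 1)) ≤ v j y + ((b j : ℝ) + 1) - ε₂ :=
        max_le (max_le (hhigh 0) (hhigh 1)) (hhigh 2)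
      rw [hζy]
      linarith
  -- pick approximants
  obtain ⟨n₁, hn₁⟩ := hs.exists_dist_lt ζ₁ (half_pos hηpos)
  obtain ⟨n₂, hn₂⟩ := hs.exists_dist_lt ζ₂ (half_pos hηpos)
  rw [dist_eq_norm] at hn₁ hn₂
  have hn₁' : ‖s n₁ - ζ₁‖ < η / 2 := by rwa [norm_sub_rev] at hn₁
  have hn₂' : ‖s n₂ - ζ₂‖ < η / 2 := by rwa [norm_sub_rev] at hn₂
  refine ⟨n₁, n₂, fun i => ?_, fun j => ?_, ?_⟩
  · refine floor_le_of_norm_lt ?_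
    calc ‖s n₁ - u i‖ ≤ ‖s n₁ - ζ₁‖ + ‖ζ₁ - u i‖ := by
          have h : s n₁ - u i = (s n₁ - ζ₁) + (ζ₁ - u i) := by abel
          rw [h]; exact norm_add_le _ _
      _ < (a i : ℝ) + 1 := by have := hζ₁bd i; linarith
  · refine floor_le_of_norm_lt ?_
    calc ‖s n₂ - v j‖ ≤ ‖s n₂ - ζ₂‖ + ‖ζ₂ - v j‖ := by
          have h : s n₂ - v j = (s n₂ - ζ₂) + (ζ₂ - v j) := by abel
          rw [h]; exact norm_add_le _ _
      _ < (b j : ℝ) + 1 := by have := hζ₂bd j; linarith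
  · -- the gap at x
    refine Int.le_floor.mpr ?_
    have hgap : ∀ i j, v j x - ((b j : ℝ) + 1) + ((m : ℝ) + θ) ≤ u i x + ((a i : ℝ) + 1) := by
      intro i j
      have := hθle i j
      linarith
    set N : ℝ := min (min (u 0 x + ((a 0 : ℝ) + 1)) (u 1 x + ((a 1 : ℝ) + 1)))
        (u 2 x + ((a 2 : ℝ) + 1)) with hN
    set M : ℝ := max (max (v 0 x - ((b 0 : ℝ) + 1)) (v 1 x - ((b 1 : ℝ) + 1)))
        (v 2 x - ((b 2 : ℝ) + 1)) with hM
    have hUb : ∀ i : Fin 3, M ≤ u i x + ((a i : ℝ) + 1) - ((m : ℝ) + θ) := by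
      intro i
      exact max_le (max_le (by linarith [hgap i 0]) (by linarith [hgap i 1]))
        (by linarith [hgap i 2])
    have hminmax : M + ((m : ℝ) + θ) ≤ N := by
      refine le_min (le_min ?_ ?_) ?_
      · linarith [hUb 0]
      · linarith [hUb 1]
      · linarith [hUb 2]
    have hz1x : ζ₁ x = N - η := rfl
    have hz2x : ζ₂ x = M + η := rfl
    have hp1 : |s n₁ x - ζ₁ x| < η / 2 := by
      have := apply_abs_le (s n₁ - ζ₁) x
      simp only [ContinuousMap.sub_apply] at this
      linarith
    have hp2 : |s n₂ x - ζ₂ x| < η / 2 := by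
      have := apply_abs_le (s n₂ - ζ₂) x
      simp only [ContinuousMap.sub_apply] at this
      linarith
    have h1 := (abs_lt.mp hp1).1
    have h2 := (abs_lt.mp hp2).2
    have hpt : (m : ℝ) ≤ s n₁ x - s n₂ x := by
      rw [hz1x] at h1; rw [hz2x] at h2
      have hθ4 : θ - 3 * η > 0 := by linarith
      linarith
    calc (m : ℝ) ≤ s n₁ x - s n₂ x := hpt
      _ ≤ |(s n₁ - s n₂) x| := by
          simp only [ContinuousMap.sub_apply]
          exact le_abs_self _
      _ ≤ ‖s n₁ - s n₂‖ := apply_abs_le _ _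



/-- First-crossing hunt: walking from `α` (where `D>1`, `E>2`) towards `β`
(where `D≤1`), the corridor condition keeps `E ≥ 2` until the first point
where `D = 1`. -/
lemma hunt_le {D E : ℝ → ℝ} (hD : Continuous D) (hE : Continuous E)
    {α β : ℝ} (hab : α ≤ β)
    (corridor : ∀ t ∈ Icc α β, ¬(1 < D t ∧ 1 < E t ∧ E t < 3 ∧ -1 < D t - E t))
    (hDα : 1 < D α) (hEα : 2 < E α) (hDβ : D β ≤ 1) :
    ∃ c ∈ Icc α β, D c = 1 ∧ 2 ≤ E c := by
  set S : Set ℝ := {t ∈ Icc α β | D t = 1} with hS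
  have hSne : S.Nonempty := by
    have h1 : (1:ℝ) ∈ Icc (D β) (D α) := ⟨hDβ, le_of_lt hDα⟩
    obtain ⟨t, ht, hDt⟩ := intermediate_value_Icc' hab hD.continuousOn h1
    exact ⟨t, ht, hDt⟩
  have hSclosed : IsClosed S := by
    have : S = Icc α β ∩ D ⁻¹' {1} := by
      ext t; simp [hS, Set.mem_setOf_eq, and_comm]
    rw [this]
    exact isClosed_Icc.inter (isClosed_singleton.preimage hD)
  have hSbdd : BddBelow S := ⟨α, fun t ht => ht.1.1⟩
  set c : ℝ := sInf S with hc
  have hcS : c ∈ S := hSclosed.csInf_mem hSne hSbdd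
  have hcmem : c ∈ Icc α β := hcS.1
  have hDc : D c = 1 := hcS.2
  have hD1 : ∀ t ∈ Ico α c, 1 < D t := by
    intro t ht
    by_contra h
    push_neg at h
    have htmem : t ∈ Icc α β := ⟨ht.1, le_trans (le_of_lt ht.2) hcmem.2⟩
    rcases eq_or_lt_of_le h with heq | hlt
    · have : c ≤ t := csInf_le hSbdd ⟨htmem, heq⟩
      exact absurd ht.2 (not_lt.mpr this)
    · have h1 : (1:ℝ) ∈ Icc (D t) (D α) := ⟨le_of_lt hlt, le_of_lt hDα⟩
      obtain ⟨t', ht', hDt'⟩ := intermediate_value_Icc' ht.1 hD.continuousOn h1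
      have ht'mem : t' ∈ Icc α β := ⟨ht'.1, le_trans ht'.2 htmem.2⟩
      have : c ≤ t' := csInf_le hSbdd ⟨ht'mem, hDt'⟩
      have : c ≤ t := le_trans this ht'.2
      exact absurd ht.2 (not_lt.mpr this)
  have hE2 : ∀ t ∈ Ico α c, 2 ≤ E t := by
    intro t ht
    by_contra h
    push_neg at h
    have h2 : (2:ℝ) ∈ Icc (E t) (E α) := ⟨le_of_lt h, le_of_lt hEα⟩
    obtain ⟨y, hy, hEy⟩ := intermediate_value_Icc' ht.1 hE.continuousOn h2
    have hymem : y ∈ Ico α c := ⟨hy.1, lt_of_le_of_lt hy.2 ht.2⟩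
    have hyIcc : y ∈ Icc α β := ⟨hy.1, le_trans (le_of_lt hymem.2) hcmem.2⟩
    have hDy := hD1 y hymem
    exact corridor y hyIcc ⟨hDy, by rw [hEy]; norm_num, by rw [hEy]; norm_num,
      by rw [hEy]; linarith⟩
  refine ⟨c, hcmem, hDc, ?_⟩
  rcases eq_or_lt_of_le hcmem.1 with heq | hlt
  · rw [← heq]; linarith
  · by_contra h
    push_neg at h
    obtain ⟨δ, hδpos, hδ⟩ := Metric.continuousAt_iff.mp hE.continuousAt (ε := 2 - E c)
      (by linarith)
    set t : ℝ := max α (c - δ/2) with htdef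
    have htc : t < c := by
      apply max_lt hlt
      linarith
    have htmem : t ∈ Ico α c := ⟨le_max_left _ _, htc⟩
    have hdist : dist t c < δ := by
      rw [Real.dist_eq, abs_lt]
      constructor
      · have : c - δ/2 ≤ t := le_max_right _ _
        linarith
      · linarith
    have := hδ hdist
    rw [Real.dist_eq, abs_lt] at this
    have := this.2
    have := hE2 t htmem
    linarith

/-- If `D > 1` everywhere between `α` and `γ`, then `E` cannot descend from
`> 2` to `< -2` without violating the corridor. -/
lemma descend {D E : ℝ → ℝ} (hD : Continuous D) (hE : Continuous E)
    {α γ : ℝ}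
    (corridor : ∀ t ∈ uIcc α γ, ¬(1 < D t ∧ 1 < E t ∧ E t < 3 ∧ -1 < D t - E t))
    (hDα : 1 < D α) (hEα : 2 < E α) (hEγ : E γ < -2) :
    ∃ y ∈ uIcc α γ, D y ≤ 1 := by
  by_contra h
  push_neg at h
  have h2 : (2:ℝ) ∈ uIcc (E α) (E γ) := by
    rw [Set.mem_uIcc]
    right
    exact ⟨by linarith, by linarith⟩
  obtain ⟨y, hy, hEy⟩ := intermediate_value_uIcc hE.continuousOn h2
  exact corridor y hy ⟨h y hy, by rw [hEy]; norm_num, by rw [hEy]; norm_num,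
    by rw [hEy]; linarith [h y hy]⟩

/-- The main crossing-finder on `[0,1]`. -/
lemma find_crossing {D E : ℝ → ℝ} (hD : Continuous D) (hE : Continuous E)
    (corridor : ∀ t ∈ Icc (0:ℝ) 1, ¬(1 < D t ∧ 1 < E t ∧ E t < 3 ∧ -1 < D t - E t))
    {α : ℝ} (hα : α ∈ Icc (0:ℝ) 1) (hDα : 1 < D α) (hEα : 2 < E α)
    (hB : (∃ β ∈ Icc (0:ℝ) 1, D β < 1) ∨ (∃ γ ∈ Icc (0:ℝ) 1, E γ < -2)) :
    ∃ c ∈ Icc (0:ℝ) 1, D c = 1 ∧ 2 ≤ E c := by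
  have hβ' : ∃ β' ∈ Icc (0:ℝ) 1, D β' ≤ 1 := by
    rcases hB with ⟨β, hβ, h1⟩ | ⟨γ, hγ, hEγ⟩
    · exact ⟨β, hβ, le_of_lt h1⟩
    · have hsub : uIcc α γ ⊆ Icc (0:ℝ) 1 := uIcc_subset_Icc hα hγ
      obtain ⟨y, hy, hDy⟩ := descend hD hE (fun t ht => corridor t (hsub ht)) hDα hEα hEγ
      exact ⟨y, hsub hy, hDy⟩
  obtain ⟨β, hβmem, hDβ⟩ := hβ'
  rcases le_total α β with hab | hab
  · have hsub : Icc α β ⊆ Icc (0:ℝ) 1 := Icc_subset_Icc hα.1 hβmem.2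
    obtain ⟨c, hcmem, h1, h2⟩ := hunt_le hD hE hab
      (fun t ht => corridor t (hsub ht)) hDα hEα hDβ
    exact ⟨c, hsub hcmem, h1, h2⟩
  · -- reflect
    set r : ℝ → ℝ := fun t => α + β - t with hr
    have hrc : Continuous r := by continuity
    have hrmap : ∀ t ∈ Icc β α, r t ∈ Icc β α := by
      intro t ht
      exact ⟨by simp [hr]; linarith [ht.2], by simp [hr]; linarith [ht.1]⟩
    have hsub : Icc β α ⊆ Icc (0:ℝ) 1 := Icc_subset_Icc hβmem.1 hα.2
    have hrβ : r β = α := by simp [hr]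
    have hrα : r α = β := by simp [hr]
    obtain ⟨c', hc'mem, h1, h2⟩ := hunt_le (D := D ∘ r) (E := E ∘ r)
      (hD.comp hrc) (hE.comp hrc) hab
      (fun t ht => corridor (r t) (hsub (hrmap t ht)))
      (by simp [Function.comp, hrβ]; exact hDα)
      (by simp [Function.comp, hrβ]; exact hEα)
      (by simp [Function.comp, hrα]; exact hDβ)
    refine ⟨r c', hsub (hrmap c' hc'mem), h1, h2⟩



/-! ### Trapezoid bumps -/

def trap (a b c e t : ℝ) : ℝ :=
  max 0 (min 1 (min ((t - a) / (b - a)) ((e - t) / (e - c))))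

lemma trap_continuous (a b c e : ℝ) : Continuous (trap a b c e) := by
  unfold trap
  refine continuous_const.max (continuous_const.min (Continuous.min ?_ ?_))
  · exact (continuous_id.sub continuous_const).div_const _
  · exact (continuous_const.sub continuous_id).div_const _

lemma trap_nonneg (a b c e t : ℝ) : 0 ≤ trap a b c e t := le_max_left _ _

lemma trap_le_one (a b c e t : ℝ) : trap a b c e t ≤ 1 :=
  max_le zero_le_one (min_le_left _ _)

lemma trap_eq_one {a b c e t : ℝ} (hab : a < b) (hce : c < e)
    (h1 : b ≤ t) (h2 : t ≤ c) : trap a b c e t = 1 := by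
  have hX : (1:ℝ) ≤ (t - a) / (b - a) := (one_le_div (by linarith)).mpr (by linarith)
  have hY : (1:ℝ) ≤ (e - t) / (e - c) := (one_le_div (by linarith)).mpr (by linarith)
  unfold trap
  rw [min_eq_left (le_min hX hY)]
  exact max_eq_right zero_le_one

lemma trap_eq_zero_left {a b c e t : ℝ} (hab : a < b) (h : t ≤ a) :
    trap a b c e t = 0 := by
  have hX : (t - a) / (b - a) ≤ 0 := div_nonpos_iff.mpr (Or.inr ⟨by linarith, by linarith⟩)
  unfold trap
  refine max_eq_left ?_
  calc min 1 (min ((t - a) / (b - a)) ((e - t) / (e - c))) ≤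
      min ((t - a) / (b - a)) ((e - t) / (e - c)) := min_le_right _ _
    _ ≤ (t - a) / (b - a) := min_le_left _ _
    _ ≤ 0 := hX

lemma trap_eq_zero_right {a b c e t : ℝ} (hce : c < e) (h : e ≤ t) :
    trap a b c e t = 0 := by
  have hY : (e - t) / (e - c) ≤ 0 := div_nonpos_iff.mpr (Or.inr ⟨by linarith, by linarith⟩)
  unfold trap
  refine max_eq_left ?_
  calc min 1 (min ((t - a) / (b - a)) ((e - t) / (e - c))) ≤
      min ((t - a) / (b - a)) ((e - t) / (e - c)) := min_le_right _ _
    _ ≤ (e - t) / (e - c) := min_le_right _ _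
    _ ≤ 0 := hY

lemma trap_pos_mem {a b c e t : ℝ} (hab : a < b) (hce : c < e)
    (h : 0 < trap a b c e t) : a < t ∧ t < e := by
  constructor
  · by_contra h'
    push_neg at h'
    rw [trap_eq_zero_left hab h'] at h
    exact lt_irrefl 0 h
  · by_contra h'
    push_neg at h'
    rw [trap_eq_zero_right hce h'] at h
    exact lt_irrefl 0 h

/-! ### Fract comparison near the crossing -/

lemma fract_compare (f₀ g₀ : X) (y : unitInterval)
    (hf1 : 0.45 < f₀ y) (hf2 : f₀ y < 0.55)
    (hd1 : 0.6 < f₀ y - g₀ y) (hd2 : f₀ y - g₀ y < 1.4) :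
    (Int.fract (f₀ y) < Int.fract (g₀ y) ↔ f₀ y - g₀ y < 1) ∧
    (Int.fract (g₀ y) < Int.fract (f₀ y) ↔ 1 < f₀ y - g₀ y) := by
  have hff : Int.fract (f₀ y) = f₀ y := Int.fract_eq_self.mpr ⟨by linarith, by linarith⟩
  have hgfloor : ⌊g₀ y⌋ = -1 := by
    rw [Int.floor_eq_iff]
    constructor
    · push_cast
      linarith
    · push_cast
      linarith
  have hfg : Int.fract (g₀ y) = g₀ y + 1 := by
    rw [Int.fract, hgfloor]
    push_cast
    ring
  rw [hff, hfg]
  constructor <;> constructor <;> intro h <;> linarith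

/-! ### Oscillation points -/

lemma oscillation_points
    (f₀ g₀ : X) (xh : unitInterval)
    (hf₀ : ∀ y, 0.45 < f₀ y ∧ f₀ y < 0.55)
    (hdx : f₀ xh - g₀ xh = 1)
    (u : ℕ → unitInterval) (hmono : Monotone u ∨ Antitone u)
    (htend : Filter.Tendsto u Filter.atTop (nhds xh))
    (hfr : ∀ n, Int.fract (f₀ (u (2*n))) < Int.fract (g₀ (u (2*n))) ∧
                Int.fract (g₀ (u (2*n+1))) < Int.fract (f₀ (u (2*n+1))))
    (M : ℕ) :
    ∃ w : ℕ → unitInterval,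
      (∀ m n, m < n → n ≤ M → w m < w n) ∧
      (∀ n, n ≤ M →
        ((Even n → f₀ (w n) - g₀ (w n) < 1) ∧ (Odd n → 1 < f₀ (w n) - g₀ (w n)))) := by
  set d : unitInterval → ℝ := fun y => f₀ y - g₀ y with hddef
  have hdcont : Continuous d := (map_continuous f₀).sub (map_continuous g₀)
  -- δ₀ : points close to xh have d within (0.6, 1.4)
  obtain ⟨δ₀, hδ₀pos, hδ₀⟩ := Metric.continuous_iff.mp hdcont xh 0.4 (by norm_num)
  have hnear : ∀ y : unitInterval, dist y xh < δ₀ → 0.6 < d y ∧ d y < 1.4 := by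
    intro y hy
    have := hδ₀ y hy
    have hdx' : d xh = 1 := hdx
    rw [Real.dist_eq, hdx'] at this
    rw [abs_lt] at this
    constructor <;> linarith [this.1, this.2]
  -- N : all u n with n ≥ N are close to xh
  obtain ⟨N, hN⟩ := (Metric.tendsto_atTop.mp htend) δ₀ hδ₀pos
  -- parity facts on the tail
  have hpar : ∀ m, N ≤ m →
      ((Even m → d (u m) < 1) ∧ (Odd m → 1 < d (u m))) := by
    intro m hm
    have hclose := hN m hm
    have hd' := hnear (u m) hclose
    have hf' := hf₀ (u m)
    have hcmp := fract_compare f₀ g₀ (u m) hf'.1 hf'.2 hd'.1 hd'.2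
    constructor
    · rintro ⟨k, hk⟩
      have hmk : m = 2 * k := by omega
      have h := (hfr k).1
      rw [← hmk] at h
      exact hcmp.1.mp h
    · rintro ⟨k, hk⟩
      have hmk : m = 2 * k + 1 := by omega
      have h := (hfr k).2
      rw [← hmk] at h
      exact hcmp.2.mp h
  -- consecutive points in the tail are distinct
  have hne : ∀ m, N ≤ m → u m ≠ u (m + 1) := by
    intro m hm heq
    rcases Nat.even_or_odd m with he | ho
    · have h1 := (hpar m hm).1 he
      have h2 := (hpar (m+1) (by omega)).2 (Even.add_one he)
      rw [← heq] at h2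
      linarith
    · have h1 := (hpar m hm).2 ho
      have h2 := (hpar (m+1) (by omega)).1 (Odd.add_one ho)
      rw [← heq] at h2
      linarith
  rcases hmono with hm | ha
  · -- monotone: strictly increasing on the tail
    have hstep : ∀ k, u (N + k) < u (N + k + 1) := by
      intro k
      have hle := hm (Nat.le_succ (N + k))
      have := hne (N + k) (by omega)
      exact lt_of_le_of_ne hle this
    have hsm : StrictMono (fun k => u (N + k)) := strictMono_nat_of_lt_succ (fun n => by
      have h := hstep n
      have e : N + n + 1 = N + (n + 1) := by omega
      rw [e] at h
      exact h)
    refine ⟨fun n => u (2 * N + n), ?_, ?_⟩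
    · intro m n hmn _
      have h := hsm (show N + m < N + n by omega)
      have e1 : N + (N + m) = 2 * N + m := by omega
      have e2 : N + (N + n) = 2 * N + n := by omega
      dsimp only at h
      rw [e1, e2] at h
      exact h
    · intro n _
      have hp := hpar (2 * N + n) (by omega)
      constructor
      · rintro ⟨k, hk⟩
        exact hp.1 ⟨N + k, by omega⟩
      · rintro ⟨k, hk⟩
        exact hp.2 ⟨N + k, by omega⟩
  · -- antitone: strictly decreasing on the tail; reverse the order
    have hstep : ∀ k, u (N + k + 1) < u (N + k) := by
      intro k
      have hle := ha (Nat.le_succ (N + k))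
      have := hne (N + k) (by omega)
      exact lt_of_le_of_ne hle (fun h => this h.symm)
    have hsa : StrictAnti (fun k => u (N + k)) := strictAnti_nat_of_succ_lt (fun n => by
      have h := hstep n
      have e : N + n + 1 = N + (n + 1) := by omega
      rw [e] at h
      exact h)
    refine ⟨fun n => u (2 * N + (2 * M - n)), ?_, ?_⟩
    · intro m n hmn hn
      have h := hsa (show N + (2 * M - n) < N + (2 * M - m) by omega)
      have e1 : N + (N + (2 * M - m)) = 2 * N + (2 * M - m) := by omega
      have e2 : N + (N + (2 * M - n)) = 2 * N + (2 * M - n) := by omega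
      dsimp only at h
      rw [e1, e2] at h
      exact h
    · intro n hn
      have hp := hpar (2 * N + (2 * M - n)) (by omega)
      constructor
      · rintro ⟨k, hk⟩
        exact hp.1 ⟨N + (M - k), by omega⟩
      · rintro ⟨k, hk⟩
        exact hp.2 ⟨N + (M - k - 1), by omega⟩





/-- A two-point floor pattern over a sequence. -/
def PatHolds (s : ℕ → X) (Iu Jv : Fin 3 → ℕ) (a b : Fin 3 → ℤ) (m : ℤ) : Prop :=
  ∃ n₁ n₂ : ℕ, (∀ i, ⌊‖s n₁ - s (Iu i)‖⌋ ≤ a i) ∧ (∀ j, ⌊‖s n₂ - s (Jv j)‖⌋ ≤ b j) ∧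
    m ≤ ⌊‖s n₁ - s n₂‖⌋

/-- Step-isometries transfer patterns. -/
lemma pat_transfer {s s' : ℕ → X}
    (hfl : ∀ i j, ⌊‖s i - s j‖⌋ = ⌊‖s' i - s' j‖⌋)
    {Iu Jv : Fin 3 → ℕ} {a b : Fin 3 → ℤ} {m : ℤ}
    (h : PatHolds s Iu Jv a b m) : PatHolds s' Iu Jv a b m := by
  obtain ⟨n₁, n₂, h1, h2, h3⟩ := h
  exact ⟨n₁, n₂, fun i => (hfl n₁ (Iu i)) ▸ h1 i, fun j => (hfl n₂ (Jv j)) ▸ h2 j,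
    (hfl n₁ n₂) ▸ h3⟩


/-- Realize a pattern from a point where the envelope inequalities hold. -/
lemma pat_of_point (s : ℕ → X) (hs : DenseRange s) (Iu Jv : Fin 3 → ℕ)
    (a b : Fin 3 → ℤ) (m : ℤ)
    (ha : ∀ i, 17 ≤ a i) (hb : ∀ j, 17 ≤ b j)
    (hu : ∀ i i', ‖s (Iu i) - s (Iu i')‖ < 9)
    (hv : ∀ j j', ‖s (Jv j) - s (Jv j')‖ < 9)
    (x : unitInterval)
    (hx : ∀ i j, ((m : ℝ) - a i - b j - 2) < s (Iu i) x - s (Jv j) x) :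
    PatHolds s Iu Jv a b m := by
  have h := realize s hs (fun i => s (Iu i)) (fun j => s (Jv j)) a b m
    (fun i => by linarith [ha i]) (fun j => by linarith [hb j])
    (fun i i' => by
      have h1 : ((17:ℤ):ℝ) ≤ (a i : ℝ) := by exact_mod_cast ha i
      have h2 : ((17:ℤ):ℝ) ≤ (a i' : ℝ) := by exact_mod_cast ha i'
      push_cast at h1 h2 ⊢
      linarith [hu i i'])
    (fun j j' => by
      have h1 : ((17:ℤ):ℝ) ≤ (b j : ℝ) := by exact_mod_cast hb j
      have h2 : ((17:ℤ):ℝ) ≤ (b j' : ℝ) := by exact_mod_cast hb j'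
      push_cast at h1 h2 ⊢
      linarith [hv j j'])
    x hx
  exact h

/-- Realize a pattern from a mirror point. -/
lemma pat_of_point_mirror (s : ℕ → X) (hs : DenseRange s) (Iu Jv : Fin 3 → ℕ)
    (a b : Fin 3 → ℤ) (m : ℤ)
    (ha : ∀ i, 17 ≤ a i) (hb : ∀ j, 17 ≤ b j)
    (hu : ∀ i i', ‖s (Iu i) - s (Iu i')‖ < 9)
    (hv : ∀ j j', ‖s (Jv j) - s (Jv j')‖ < 9)
    (x : unitInterval)
    (hx : ∀ i j, ((m : ℝ) - a i - b j - 2) < s (Jv j) x - s (Iu i) x) :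
    PatHolds s Iu Jv a b m := by
  have h := realize s hs (fun j => s (Jv j)) (fun i => s (Iu i)) b a m
    (fun j => by linarith [hb j]) (fun i => by linarith [ha i])
    (fun j j' => by
      have h1 : ((17:ℤ):ℝ) ≤ (b j : ℝ) := by exact_mod_cast hb j
      have h2 : ((17:ℤ):ℝ) ≤ (b j' : ℝ) := by exact_mod_cast hb j'
      push_cast at h1 h2 ⊢
      linarith [hv j j'])
    (fun i i' => by
      have h1 : ((17:ℤ):ℝ) ≤ (a i : ℝ) := by exact_mod_cast ha i
      have h2 : ((17:ℤ):ℝ) ≤ (a i' : ℝ) := by exact_mod_cast ha i'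
      push_cast at h1 h2 ⊢
      linarith [hu i i'])
    x (fun j i => by have := hx i j; linarith)
  obtain ⟨n₁, n₂, h1, h2, h3⟩ := h
  refine ⟨n₂, n₁, h2, h1, ?_⟩
  rwa [norm_sub_rev]

/-- Obstruction: a pattern forces the envelope inequalities somewhere. -/
lemma point_of_pat (s : ℕ → X) (Iu Jv : Fin 3 → ℕ) (a b : Fin 3 → ℤ) (m : ℤ)
    (h : PatHolds s Iu Jv a b m) :
    (∃ x : unitInterval, ∀ i j, ((m : ℝ) - a i - b j - 2) < s (Iu i) x - s (Jv j) x) ∨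
    (∃ x : unitInterval, ∀ i j, ((m : ℝ) - a i - b j - 2) < s (Jv j) x - s (Iu i) x) := by
  obtain ⟨n₁, n₂, h1, h2, h3⟩ := h
  exact obstruct (s n₁) (s n₂) (fun i => s (Iu i)) (fun j => s (Jv j)) a b m h1 h2 h3

end StepIsoAux

open StepIsoAux

set_option maxHeartbeats 4000000

/-- There is no step-isometry between an IC-dense set and a smoothly dense set of
polynomial functions: the graphs `GR(ICD)` and `GR(SD)` are non-isomorphic. -/
theorem no_step_isometry_ICDense_smoothlyDense_poly
    (f g : ℕ → C(unitInterval, ℝ))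
    (hf_inj : Function.Injective f) (hg_inj : Function.Injective g)
    (hf : ICDense (Set.range f)) (hg : SmoothlyDense (Set.range g))
    (hpoly : ∀ n : ℕ, ∃ p : Polynomial ℝ, ∀ x : unitInterval, g n x = p.eval (x : ℝ)) :
    ¬ ∃ π : ℕ ≃ ℕ, ∀ i j : ℕ, ⌊‖f i - f j‖⌋ = ⌊‖g (π i) - g (π j)‖⌋ := by
  classical
  rintro ⟨π, hπ⟩
  set G : ℕ → C(unitInterval, ℝ) := fun n => g (π n) with hGdef
  have hπG : ∀ i j : ℕ, ⌊‖f i - f j‖⌋ = ⌊‖G i - G j‖⌋ := fun i j => hπ i j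
  have hπG' : ∀ i j : ℕ, ⌊‖G i - G j‖⌋ = ⌊‖f i - f j‖⌋ := fun i j => (hπG i j).symm
  have hGrange : Set.range G = Set.range g := π.surjective.range_comp g
  have hGdense : DenseRange G := by
    have hd : Dense (Set.range g) := hg.2.1
    rw [DenseRange, hGrange]; exact hd
  have hfdense : DenseRange f := hf.2.1
  have hGinj : Function.Injective G := fun a b h => π.injective (hg_inj h)
  -- ### f₀ := f i₀ near the constant 1/2
  obtain ⟨i₀, hi₀⟩ := hfdense.exists_dist_lt (ContinuousMap.const unitInterval (1/2 : ℝ))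
    (show (0:ℝ) < 1/20 by norm_num)
  rw [dist_eq_norm] at hi₀
  have hf₀pt : ∀ y : unitInterval, 0.45 < f i₀ y ∧ f i₀ y < 0.55 := by
    intro y
    have h := apply_abs_le (ContinuousMap.const unitInterval (1/2 : ℝ) - f i₀) y
    simp only [ContinuousMap.sub_apply, ContinuousMap.const_apply] at h
    have h2 := lt_of_le_of_lt h hi₀
    rw [abs_lt] at h2
    constructor
    · linarith [h2.2]
    · linarith [h2.1]
  -- ### g₀ := f j₀ near f i₀ - (1/2 + x)
  set ψ : C(unitInterval, ℝ) := ⟨fun y => 1/2 + (y : ℝ),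
    continuous_const.add continuous_subtype_val⟩ with hψdef
  have hψval : ∀ y : unitInterval, ψ y = 1/2 + (y : ℝ) := fun y => rfl
  have hψnorm : ‖ψ‖ ≤ 3/2 := by
    refine (ψ.norm_le (by norm_num)).mpr (fun y => ?_)
    rw [Real.norm_eq_abs, hψval, abs_le]
    constructor
    · have := y.2.1; linarith
    · have := y.2.2; linarith
  obtain ⟨j₀, hj₀⟩ := hfdense.exists_dist_lt (f i₀ - ψ) (show (0:ℝ) < 1/20 by norm_num)
  rw [dist_eq_norm] at hj₀
  have hdpt : ∀ y : unitInterval, 0.45 + (y:ℝ) < f i₀ y - f j₀ y ∧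
      f i₀ y - f j₀ y < 0.55 + (y:ℝ) := by
    intro y
    have h := apply_abs_le ((f i₀ - ψ) - f j₀) y
    simp only [ContinuousMap.sub_apply] at h
    have h2 := lt_of_le_of_lt h hj₀
    rw [abs_lt, hψval] at h2
    constructor
    · linarith [h2.1]
    · linarith [h2.2]
  have hd04 : ∀ y : unitInterval, 0.4 < f i₀ y - f j₀ y := by
    intro y
    have := (hdpt y).1
    have hy := y.2.1
    linarith
  have hd16 : ∀ y : unitInterval, f i₀ y - f j₀ y < 1.6 := by
    intro y
    have := (hdpt y).2
    have hy := y.2.2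
    linarith
  have hne₀ : f i₀ ≠ f j₀ := by
    intro h
    have h1 := hd04 0
    rw [h] at h1
    simp at h1
    linarith
  have hij₀ : i₀ ≠ j₀ := fun h => hne₀ (by rw [h])
  -- ### the crossing point
  have hDreCont : Continuous (fun t : ℝ =>
      f i₀ (projIcc (0:ℝ) 1 zero_le_one t) - f j₀ (projIcc (0:ℝ) 1 zero_le_one t)) := by
    have h1 : Continuous fun t : ℝ => projIcc (0:ℝ) 1 zero_le_one t := continuous_projIcc
    exact ((map_continuous (f i₀)).comp h1).sub ((map_continuous (f j₀)).comp h1)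
  have hproj0 : projIcc (0:ℝ) 1 zero_le_one (0:ℝ) = (0 : unitInterval) := by
    rw [projIcc_left]; rfl
  have hproj1 : projIcc (0:ℝ) 1 zero_le_one (1:ℝ) = (1 : unitInterval) := by
    rw [projIcc_right]; rfl
  have hD0 : f i₀ (0 : unitInterval) - f j₀ (0 : unitInterval) < 1 := by
    have := (hdpt 0).2
    have h0 : ((0 : unitInterval) : ℝ) = 0 := rfl
    rw [h0] at this
    linarith
  have hD1 : 1 < f i₀ (1 : unitInterval) - f j₀ (1 : unitInterval) := by
    have := (hdpt 1).1
    have h1 : ((1 : unitInterval) : ℝ) = 1 := rfl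
    rw [h1] at this
    linarith
  obtain ⟨xr, hxr, hxr1⟩ := intermediate_value_Icc (zero_le_one) hDreCont.continuousOn
    (show (1:ℝ) ∈ Icc (f i₀ (projIcc (0:ℝ) 1 zero_le_one (0:ℝ)) - f j₀ (projIcc (0:ℝ) 1 zero_le_one 0))
        (f i₀ (projIcc (0:ℝ) 1 zero_le_one (1:ℝ)) - f j₀ (projIcc (0:ℝ) 1 zero_le_one 1)) by
      rw [hproj0, hproj1]
      exact ⟨le_of_lt hD0, le_of_lt hD1⟩)
  set xh : unitInterval := ⟨xr, hxr⟩ with hxhdef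
  have hdxh : f i₀ xh - f j₀ xh = 1 := by
    have hxr1' : f i₀ (projIcc (0:ℝ) 1 zero_le_one xr) -
        f j₀ (projIcc (0:ℝ) 1 zero_le_one xr) = 1 := hxr1
    rw [projIcc_of_mem zero_le_one hxr] at hxr1'
    exact hxr1'
  have hxhIoo : (xh : ℝ) ∈ Set.Ioo (0:ℝ) 1 := by
    constructor
    · rcases lt_or_eq_of_le hxr.1 with h | h
      · exact h
      · exfalso
        have : xh = (0 : unitInterval) := by
          apply Subtype.ext
          exact h.symm
        rw [this] at hdxh
        linarith
    · rcases lt_or_eq_of_le hxr.2 with h | h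
      · exact h
      · exfalso
        have : xh = (1 : unitInterval) := by
          apply Subtype.ext
          exact h
        rw [this] at hdxh
        linarith
  have hfract : Int.fract (f i₀ xh) = Int.fract (f j₀ xh) := by
    have h : f i₀ xh = f j₀ xh + ((1:ℤ):ℝ) := by push_cast; linarith
    rw [h, Int.fract_add_intCast]
  obtain ⟨u, hmono, htend, hfr⟩ := hf.2.2.2.2 (f i₀) (f j₀) ⟨i₀, rfl⟩ ⟨j₀, rfl⟩ hne₀
    xh hxhIoo hfract
  -- ### the SD pair and the target number of crossings
  have hGne : G i₀ ≠ G j₀ := fun h => hij₀ (hGinj h)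
  have hGmem : ∀ n, G n ∈ Set.range g := fun n => ⟨π n, rfl⟩
  have hcrfin : (cr (G i₀) (G j₀)).Finite :=
    (hg.2.2.1.2 (G i₀) (G j₀) (hGmem i₀) (hGmem j₀) hGne).1
  set K : ℕ := hcrfin.toFinset.card + 1 with hKdef
  -- ### oscillation points
  obtain ⟨w, hw1, hw2⟩ := oscillation_points (f i₀) (f j₀) xh hf₀pt hdxh u hmono htend hfr
    (6*K+6)
  -- ### real coordinates of the oscillation points and the minimal gap
  set wr : ℕ → ℝ := fun n => ((w n : unitInterval) : ℝ) with hwrdef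
  have hwmono : ∀ m n, m < n → n ≤ 6*K+6 → wr m < wr n := by
    intro m n h1 h2
    exact Subtype.coe_lt_coe.mpr (hw1 m n h1 h2)
  have hwmono' : ∀ m n, m ≤ n → n ≤ 6*K+6 → wr m ≤ wr n := by
    intro m n h1 h2
    rcases eq_or_lt_of_le h1 with h | h
    · rw [h]
    · exact le_of_lt (hwmono m n h h2)
  have hrange_ne : (Finset.range (6*K+6)).Nonempty := ⟨0, Finset.mem_range.mpr (by omega)⟩
  obtain ⟨n₀, hn₀mem, hgminle'⟩ := Finset.exists_min_image (Finset.range (6*K+6))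
    (fun n => wr (n+1) - wr n) hrange_ne
  set gmin : ℝ := wr (n₀+1) - wr n₀ with hgmindef
  have hgminpos : 0 < gmin := by
    have h := hwmono n₀ (n₀+1) (by omega) (by
      have := Finset.mem_range.mp hn₀mem
      omega)
    simp only [hgmindef]
    linarith
  have hgminle : ∀ n, n < 6*K+6 → gmin ≤ wr (n+1) - wr n := by
    intro n hn
    exact hgminle' n (Finset.mem_range.mpr hn)
  -- window bounds
  set lo : Fin K → ℝ := fun j => wr (6*(j:ℕ)) - gmin/3 with hlodef
  set hi : Fin K → ℝ := fun j => wr (6*(j:ℕ)+4) + gmin/3 with hhidef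
  have hwin_sep : ∀ j j' : Fin K, (j:ℕ) < (j':ℕ) → hi j < lo j' := by
    intro j j' hjj
    have hj'2 := j'.2
    have h1 : gmin ≤ wr (6*(j:ℕ)+5) - wr (6*(j:ℕ)+4) := hgminle _ (by omega)
    have h2 : gmin ≤ wr (6*(j:ℕ)+6) - wr (6*(j:ℕ)+5) := hgminle _ (by omega)
    have h3 : wr (6*(j:ℕ)+6) ≤ wr (6*(j':ℕ)) := hwmono' _ _ (by omega) (by omega)
    simp only [hhidef, hlodef]
    linarith
  -- ### the probes
  have hprobe : ∀ j : Fin K, ∃ kj : ℕ,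
      (∃ x : unitInterval, 1 < f i₀ x - f j₀ x ∧ 2 < f kj x - f j₀ x) ∧
      (∃ x : unitInterval, f i₀ x - f j₀ x < 1 ∧ 2 < f kj x - f j₀ x ∧
        2 < f kj x - f i₀ x) ∧
      (∀ y : unitInterval, ¬(1 < f i₀ y - f j₀ y ∧ 1 < f kj y - f j₀ y ∧
        f kj y - f j₀ y < 3 ∧ -1 < f i₀ y - f kj y)) ∧
      (∀ y : unitInterval, -1 < f kj y - f j₀ y) ∧
      (∀ y : unitInterval, 1 < f kj y - f j₀ y → lo j < (y:ℝ) ∧ (y:ℝ) < hi j) ∧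
      ‖f kj - f j₀‖ < 4 := by
    intro j
    have hjK := j.2
    -- parity facts
    have hdl : f i₀ (w (6*(j:ℕ))) - f j₀ (w (6*(j:ℕ))) < 1 :=
      (hw2 _ (by omega)).1 ⟨3*(j:ℕ), by ring⟩
    have hdp : 1 < f i₀ (w (6*(j:ℕ)+1)) - f j₀ (w (6*(j:ℕ)+1)) :=
      (hw2 _ (by omega)).2 ⟨3*(j:ℕ), by ring⟩
    have hdq : f i₀ (w (6*(j:ℕ)+2)) - f j₀ (w (6*(j:ℕ)+2)) < 1 :=
      (hw2 _ (by omega)).1 ⟨3*(j:ℕ)+1, by ring⟩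
    have hdr : f i₀ (w (6*(j:ℕ)+4)) - f j₀ (w (6*(j:ℕ)+4)) < 1 :=
      (hw2 _ (by omega)).1 ⟨3*(j:ℕ)+2, by ring⟩
    -- continuity radii at the transition centers
    have hcont : Continuous fun y : unitInterval => f i₀ y - f j₀ y :=
      (map_continuous (f i₀)).sub (map_continuous (f j₀))
    obtain ⟨δl, hδlpos, hδl⟩ := Metric.continuous_iff.mp hcont (w (6*(j:ℕ)))
      (1 - (f i₀ (w (6*(j:ℕ))) - f j₀ (w (6*(j:ℕ))))) (by linarith)
    obtain ⟨δr, hδrpos, hδr⟩ := Metric.continuous_iff.mp hcont (w (6*(j:ℕ)+4))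
      (1 - (f i₀ (w (6*(j:ℕ)+4)) - f j₀ (w (6*(j:ℕ)+4)))) (by linarith)
    have hδl' : ∀ y : unitInterval, dist y (w (6*(j:ℕ))) < δl → f i₀ y - f j₀ y < 1 := by
      intro y hy
      have h := hδl y hy
      rw [Real.dist_eq, abs_lt] at h
      linarith [h.2]
    have hδr' : ∀ y : unitInterval, dist y (w (6*(j:ℕ)+4)) < δr → f i₀ y - f j₀ y < 1 := by
      intro y hy
      have h := hδr y hy
      rw [Real.dist_eq, abs_lt] at h
      linarith [h.2]
    set sg : ℝ := min (min (δl/2) (δr/2)) (gmin/3) with hsgdef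
    have hsgpos : 0 < sg := lt_min (lt_min (by linarith) (by linarith)) (by linarith)
    have hsgl : sg ≤ δl/2 := le_trans (min_le_left _ _) (min_le_left _ _)
    have hsgr : sg ≤ δr/2 := le_trans (min_le_left _ _) (min_le_right _ _)
    have hsgg : sg ≤ gmin/3 := min_le_right _ _
    -- gaps between consecutive oscillation points
    have hg1 : gmin ≤ wr (6*(j:ℕ)+1) - wr (6*(j:ℕ)) := hgminle _ (by omega)
    have hg2 : gmin ≤ wr (6*(j:ℕ)+2) - wr (6*(j:ℕ)+1) := hgminle _ (by omega)
    have hg3 : gmin ≤ wr (6*(j:ℕ)+3) - wr (6*(j:ℕ)+2) := hgminle _ (by omega)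
    have hg4 : gmin ≤ wr (6*(j:ℕ)+4) - wr (6*(j:ℕ)+3) := hgminle _ (by omega)
    set A : ℝ := wr (6*(j:ℕ)) - sg with hAdef
    set B : ℝ := wr (6*(j:ℕ)) + sg with hBdef
    set Cc : ℝ := wr (6*(j:ℕ)+4) - sg with hCcdef
    set Ee : ℝ := wr (6*(j:ℕ)+4) + sg with hEedef
    have hAB : A < B := by simp only [hAdef, hBdef]; linarith
    have hCE : Cc < Ee := by simp only [hCcdef, hEedef]; linarith
    have hBp : B ≤ wr (6*(j:ℕ)+1) := by simp only [hBdef]; linarith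
    have hBq : B ≤ wr (6*(j:ℕ)+2) := by simp only [hBdef]; linarith
    have hpC : wr (6*(j:ℕ)+1) ≤ Cc := by simp only [hCcdef]; linarith
    have hqC : wr (6*(j:ℕ)+2) ≤ Cc := by simp only [hCcdef]; linarith
    -- the probe
    set T : C(unitInterval, ℝ) := ⟨fun y => (7/2) * trap A B Cc Ee (y:ℝ),
      continuous_const.mul ((trap_continuous A B Cc Ee).comp continuous_subtype_val)⟩
      with hTdef
    have hTval : ∀ y : unitInterval, T y = (7/2) * trap A B Cc Ee (y:ℝ) := fun y => rfl
    have hTnorm : ‖T‖ ≤ 7/2 := by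
      refine (T.norm_le (by norm_num)).mpr (fun y => ?_)
      rw [Real.norm_eq_abs, hTval]
      rw [abs_of_nonneg (by
        have := trap_nonneg A B Cc Ee (y:ℝ)
        linarith)]
      have := trap_le_one A B Cc Ee (y:ℝ)
      linarith
    obtain ⟨kj, hkj⟩ := hfdense.exists_dist_lt (f j₀ + T) (show (0:ℝ) < 1/20 by norm_num)
    rw [dist_eq_norm] at hkj
    have heej : ∀ y : unitInterval,
        |(f kj y - f j₀ y) - (7/2) * trap A B Cc Ee (y:ℝ)| < 1/20 := by
      intro y
      have h := apply_abs_le ((f j₀ + T) - f kj) y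
      simp only [ContinuousMap.sub_apply, ContinuousMap.add_apply] at h
      have h2 := lt_of_le_of_lt h hkj
      rw [hTval] at h2
      have heq : (f kj y - f j₀ y) - (7/2) * trap A B Cc Ee (y:ℝ) =
          -(f j₀ y + (7/2) * trap A B Cc Ee (y:ℝ) - f kj y) := by ring
      rw [heq, abs_neg]
      exact h2
    -- positive trap forces membership in the window
    have htrap_win : ∀ y : unitInterval, 1 < f kj y - f j₀ y →
        A < (y:ℝ) ∧ (y:ℝ) < Ee := by
      intro y hy
      have htr := heej y
      rw [abs_lt] at htr
      have htrpos : 0 < trap A B Cc Ee (y:ℝ) := by linarith [htr.1]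
      exact trap_pos_mem hAB hCE htrpos
    refine ⟨kj, ?_, ?_, ?_, ?_, ?_, ?_⟩
    · -- F1 at p := w(6j+1)
      refine ⟨w (6*(j:ℕ)+1), hdp, ?_⟩
      have h1 : trap A B Cc Ee ((w (6*(j:ℕ)+1) : unitInterval) : ℝ) = 1 :=
        trap_eq_one hAB hCE hBp hpC
      have h2 := heej (w (6*(j:ℕ)+1))
      rw [h1] at h2
      rw [abs_lt] at h2
      linarith [h2.1]
    · -- F2 at q := w(6j+2)
      refine ⟨w (6*(j:ℕ)+2), hdq, ?_, ?_⟩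
      all_goals
        have h1 : trap A B Cc Ee ((w (6*(j:ℕ)+2) : unitInterval) : ℝ) = 1 :=
          trap_eq_one hAB hCE hBq hqC
      all_goals
        have h2 := heej (w (6*(j:ℕ)+2))
      all_goals rw [h1] at h2
      all_goals rw [abs_lt] at h2
      · linarith [h2.1]
      · linarith [h2.1]
    · -- F3: the corridor
      rintro y ⟨h1, h2, h3, h4⟩
      have htr := heej y
      rw [abs_lt] at htr
      have htrpos : 0 < trap A B Cc Ee (y:ℝ) := by linarith [htr.1]
      obtain ⟨hAy, hyE⟩ := trap_pos_mem hAB hCE htrpos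
      by_cases hyB : B ≤ (y:ℝ)
      · by_cases hyC : (y:ℝ) ≤ Cc
        · have h5 : trap A B Cc Ee (y:ℝ) = 1 := trap_eq_one hAB hCE hyB hyC
          rw [h5] at htr
          linarith [htr.1]
        · push_neg at hyC
          have hdist : dist y (w (6*(j:ℕ)+4)) < δr := by
            rw [Subtype.dist_eq, Real.dist_eq, abs_lt]
            constructor
            · simp only [hCcdef] at hyC
              have : ((w (6*(j:ℕ)+4) : unitInterval) : ℝ) = wr (6*(j:ℕ)+4) := rfl
              rw [this]
              linarith
            · simp only [hEedef] at hyE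
              have : ((w (6*(j:ℕ)+4) : unitInterval) : ℝ) = wr (6*(j:ℕ)+4) := rfl
              rw [this]
              linarith
          have := hδr' y hdist
          linarith
      · push_neg at hyB
        have hdist : dist y (w (6*(j:ℕ))) < δl := by
          rw [Subtype.dist_eq, Real.dist_eq, abs_lt]
          constructor
          · simp only [hAdef] at hAy
            have : ((w (6*(j:ℕ)) : unitInterval) : ℝ) = wr (6*(j:ℕ)) := rfl
            rw [this]
            linarith
          · simp only [hBdef] at hyB
            have : ((w (6*(j:ℕ)) : unitInterval) : ℝ) = wr (6*(j:ℕ)) := rfl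
            rw [this]
            linarith
        have := hδl' y hdist
        linarith
    · -- F5: the probe is almost nonnegative
      intro y
      have htr := heej y
      rw [abs_lt] at htr
      have := trap_nonneg A B Cc Ee (y:ℝ)
      nlinarith [htr.1]
    · -- F6: window localization
      intro y hy
      obtain ⟨hAy, hyE⟩ := htrap_win y hy
      constructor
      · simp only [hlodef]
        simp only [hAdef] at hAy
        linarith
      · simp only [hhidef]
        simp only [hEedef] at hyE
        linarith
    · -- F7: norm bound
      have heq : f kj - f j₀ = -((f j₀ + T) - f kj) + T := by abel
      calc ‖f kj - f j₀‖ = ‖-((f j₀ + T) - f kj) + T‖ := by rw [heq]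
        _ ≤ ‖-((f j₀ + T) - f kj)‖ + ‖T‖ := norm_add_le _ _
        _ = ‖(f j₀ + T) - f kj‖ + ‖T‖ := by rw [norm_neg]
        _ < 4 := by linarith
  choose k hk using hprobe
  have hF1 := fun j => (hk j).1
  have hF2 := fun j => (hk j).2.1
  have hF3 := fun j => (hk j).2.2.1
  have hF5 := fun j => (hk j).2.2.2.1
  have hF6 := fun j => (hk j).2.2.2.2.1
  have hF7 := fun j => (hk j).2.2.2.2.2
  -- ### norm bounds for all relevant indices
  set P : ℕ → Prop := fun n => n = i₀ ∨ n = j₀ ∨ ∃ j : Fin K, n = k j with hPdef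
  have hnij : ‖f i₀ - f j₀‖ < 2 := by
    have heq : f i₀ - f j₀ = (f i₀ - ψ - f j₀) + ψ := by abel
    calc ‖f i₀ - f j₀‖ = ‖(f i₀ - ψ - f j₀) + ψ‖ := by rw [heq]
      _ ≤ ‖f i₀ - ψ - f j₀‖ + ‖ψ‖ := norm_add_le _ _
      _ < 2 := by linarith
  have hP4 : ∀ x, P x → ‖f x - f j₀‖ < 4 := by
    rintro x (rfl | rfl | ⟨j, rfl⟩)
    · linarith
    · simp
    · exact hF7 j
  have hP8 : ∀ x y, P x → P y → ‖f x - f y‖ < 8 := by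
    intro x y hx hy
    have heq : f x - f y = (f x - f j₀) - (f y - f j₀) := by abel
    calc ‖f x - f y‖ = ‖(f x - f j₀) - (f y - f j₀)‖ := by rw [heq]
      _ ≤ ‖f x - f j₀‖ + ‖f y - f j₀‖ := norm_sub_le _ _
      _ < 8 := by linarith [hP4 x hx, hP4 y hy]
  have hP9f : ∀ x y, P x → P y → ‖f x - f y‖ < 9 := fun x y hx hy => by
    linarith [hP8 x y hx hy]
  have hP9G : ∀ x y, P x → P y → ‖G x - G y‖ < 9 := by
    intro x y hx hy
    have h1 : ⌊‖f x - f y‖⌋ ≤ 7 := floor_le_of_norm_lt (by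
      push_cast
      linarith [hP8 x y hx hy])
    rw [hπG] at h1
    have h2 := norm_lt_of_floor_le h1
    push_cast at h2
    linarith
  have hPi₀ : P i₀ := Or.inl rfl
  have hPj₀ : P j₀ := Or.inr (Or.inl rfl)
  have hPk : ∀ j, P (k j) := fun j => Or.inr (Or.inr ⟨j, rfl⟩)
  -- ### pattern A transported
  have hApt : ∀ j : Fin K,
      (∃ x : unitInterval, 1 < G i₀ x - G j₀ x ∧ 2 < G (k j) x - G j₀ x) ∨
      (∃ x : unitInterval, 1 < G j₀ x - G i₀ x ∧ 2 < G j₀ x - G (k j) x) := by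
    intro j
    obtain ⟨x, hx1, hx2⟩ := hF1 j
    have hpat : PatHolds f ![i₀, k j, k j] ![j₀, j₀, j₀] ![20, 19, 19] ![20, 20, 20] 43 :=
      pat_of_point f hfdense _ _ _ _ 43
        (by intro i; fin_cases i <;> norm_num)
        (by intro i; fin_cases i <;> norm_num)
        (by intro i i'; fin_cases i <;> fin_cases i' <;>
          first
            | exact hP9f _ _ hPi₀ hPi₀
            | exact hP9f _ _ hPi₀ (hPk j)
            | exact hP9f _ _ (hPk j) hPi₀
            | exact hP9f _ _ (hPk j) (hPk j))
        (by intro i i'; fin_cases i <;> fin_cases i' <;> exact hP9f _ _ hPj₀ hPj₀)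
        x
        (by intro i jj; fin_cases i <;> fin_cases jj <;> norm_num <;> linarith)
    have hpatG := pat_transfer hπG hpat
    rcases point_of_pat G _ _ _ _ _ hpatG with ⟨y, hy⟩ | ⟨y, hy⟩
    · left
      have h00 := hy 0 0
      have h10 := hy 1 0
      norm_num at h00 h10
      exact ⟨y, h00, h10⟩
    · right
      have h00 := hy 0 0
      have h10 := hy 1 0
      norm_num at h00 h10
      exact ⟨y, h00, h10⟩
  -- ### pattern B transported
  have hBpt : ∀ j : Fin K,
      (∃ x : unitInterval, G i₀ x - G j₀ x < 1 ∧ 2 < G (k j) x - G j₀ x) ∨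
      (∃ x : unitInterval, -1 < G i₀ x - G j₀ x ∧ G (k j) x - G j₀ x < -2) := by
    intro j
    obtain ⟨x, hx1, hx2, hx3⟩ := hF2 j
    have hpat : PatHolds f ![j₀, k j, k j] ![i₀, j₀, j₀] ![20, 17, 17] ![20, 20, 20] 41 :=
      pat_of_point f hfdense _ _ _ _ 41
        (by intro i; fin_cases i <;> norm_num)
        (by intro i; fin_cases i <;> norm_num)
        (by intro i i'; fin_cases i <;> fin_cases i' <;>
          first
            | exact hP9f _ _ hPj₀ hPj₀
            | exact hP9f _ _ hPj₀ (hPk j)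
            | exact hP9f _ _ (hPk j) hPj₀
            | exact hP9f _ _ (hPk j) (hPk j))
        (by intro i i'; fin_cases i <;> fin_cases i' <;>
          first
            | exact hP9f _ _ hPi₀ hPi₀
            | exact hP9f _ _ hPi₀ hPj₀
            | exact hP9f _ _ hPj₀ hPi₀
            | exact hP9f _ _ hPj₀ hPj₀)
        x
        (by intro i jj; fin_cases i <;> fin_cases jj <;> norm_num <;> linarith)
    have hpatG := pat_transfer hπG hpat
    rcases point_of_pat G _ _ _ _ _ hpatG with ⟨y, hy⟩ | ⟨y, hy⟩
    · left
      have h00 := hy 0 0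
      have h11 := hy 1 1
      norm_num at h00 h11
      exact ⟨y, by linarith, h11⟩
    · right
      have h00 := hy 0 0
      have h11 := hy 1 1
      norm_num at h00 h11
      exact ⟨y, by linarith, by linarith⟩
  -- ### pattern C (corridor) exclusions
  have hCn : ∀ j : Fin K,
      ¬ PatHolds G ![i₀, k j, j₀] ![j₀, k j, k j] ![18,18,20] ![20,22,22] 41 := by
    intro j hpatG
    have hpat := pat_transfer hπG' hpatG
    rcases point_of_pat f _ _ _ _ _ hpat with ⟨y, hy⟩ | ⟨y, hy⟩
    · have h00 := hy 0 0
      have h10 := hy 1 0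
      have h21 : ((41:ℤ):ℝ) - ((20:ℤ):ℝ) - ((22:ℤ):ℝ) - 2 < f j₀ y - f (k j) y := hy 2 1
      have h01 := hy 0 1
      norm_num at h00 h10 h21 h01
      exact hF3 j y ⟨h00, h10, by linarith, by linarith⟩
    · have h00 := hy 0 0
      norm_num at h00
      have := hd04 y
      linarith
  have hCexcl : ∀ (j : Fin K) (y : unitInterval),
      ¬(1 < G i₀ y - G j₀ y ∧ 1 < G (k j) y - G j₀ y ∧ G (k j) y - G j₀ y < 3 ∧
        -1 < (G i₀ y - G j₀ y) - (G (k j) y - G j₀ y)) := by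
    rintro j y ⟨h1, h2, h3, h4⟩
    refine hCn j (pat_of_point G hGdense _ _ _ _ 41 ?_ ?_ ?_ ?_ y ?_)
    · intro i; fin_cases i <;> norm_num
    · intro i; fin_cases i <;> norm_num
    · intro i i'; fin_cases i <;> fin_cases i' <;>
        first
          | exact hP9G _ _ hPi₀ hPi₀
          | exact hP9G _ _ hPi₀ (hPk j)
          | exact hP9G _ _ hPi₀ hPj₀
          | exact hP9G _ _ (hPk j) hPi₀
          | exact hP9G _ _ (hPk j) (hPk j)
          | exact hP9G _ _ (hPk j) hPj₀
          | exact hP9G _ _ hPj₀ hPi₀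
          | exact hP9G _ _ hPj₀ (hPk j)
          | exact hP9G _ _ hPj₀ hPj₀
    · intro i i'; fin_cases i <;> fin_cases i' <;>
        first
          | exact hP9G _ _ hPj₀ hPj₀
          | exact hP9G _ _ hPj₀ (hPk j)
          | exact hP9G _ _ (hPk j) hPj₀
          | exact hP9G _ _ (hPk j) (hPk j)
    · intro i jj; fin_cases i <;> fin_cases jj <;> norm_num <;> linarith
  have hCexclM : ∀ (j : Fin K) (y : unitInterval),
      ¬(1 < G j₀ y - G i₀ y ∧ 1 < G j₀ y - G (k j) y ∧ G j₀ y - G (k j) y < 3 ∧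
        -1 < (G j₀ y - G i₀ y) - (G j₀ y - G (k j) y)) := by
    rintro j y ⟨h1, h2, h3, h4⟩
    refine hCn j (pat_of_point_mirror G hGdense _ _ _ _ 41 ?_ ?_ ?_ ?_ y ?_)
    · intro i; fin_cases i <;> norm_num
    · intro i; fin_cases i <;> norm_num
    · intro i i'; fin_cases i <;> fin_cases i' <;>
        first
          | exact hP9G _ _ hPi₀ hPi₀
          | exact hP9G _ _ hPi₀ (hPk j)
          | exact hP9G _ _ hPi₀ hPj₀
          | exact hP9G _ _ (hPk j) hPi₀
          | exact hP9G _ _ (hPk j) (hPk j)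
          | exact hP9G _ _ (hPk j) hPj₀
          | exact hP9G _ _ hPj₀ hPi₀
          | exact hP9G _ _ hPj₀ (hPk j)
          | exact hP9G _ _ hPj₀ hPj₀
    · intro i i'; fin_cases i <;> fin_cases i' <;>
        first
          | exact hP9G _ _ hPj₀ hPj₀
          | exact hP9G _ _ hPj₀ (hPk j)
          | exact hP9G _ _ (hPk j) hPj₀
          | exact hP9G _ _ (hPk j) (hPk j)
    · intro i jj; fin_cases i <;> fin_cases jj <;> norm_num <;> linarith
  -- ### pattern D (separation) exclusions
  have hDn : ∀ j j' : Fin K, j ≠ j' →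
      ¬ PatHolds G ![k j, k j', k j] ![j₀, j₀, j₀] ![19,19,19] ![20,20,20] 42 := by
    intro j j' hnejj hpatG
    have hpat := pat_transfer hπG' hpatG
    rcases point_of_pat f _ _ _ _ _ hpat with ⟨y, hy⟩ | ⟨y, hy⟩
    · have h00 := hy 0 0
      have h10 := hy 1 0
      norm_num at h00 h10
      have hw := hF6 j y h00
      have hw' := hF6 j' y h10
      rcases Nat.lt_or_ge (j:ℕ) (j':ℕ) with h | h
      · have := hwin_sep j j' h
        linarith [hw.2, hw'.1]
      · have hlt : (j':ℕ) < (j:ℕ) := by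
          rcases Nat.lt_or_ge (j':ℕ) (j:ℕ) with h' | h'
          · exact h'
          · exfalso
            exact hnejj (Fin.ext (by omega))
        have := hwin_sep j' j hlt
        linarith [hw.1, hw'.2]
    · have h00 := hy 0 0
      norm_num at h00
      have := hF5 j y
      linarith
  have hDexcl : ∀ (j j' : Fin K), j ≠ j' → ∀ y : unitInterval,
      ¬(1 < G (k j) y - G j₀ y ∧ 1 < G (k j') y - G j₀ y) := by
    rintro j j' hnejj y ⟨h1, h2⟩
    refine hDn j j' hnejj (pat_of_point G hGdense _ _ _ _ 42 ?_ ?_ ?_ ?_ y ?_)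
    · intro i; fin_cases i <;> norm_num
    · intro i; fin_cases i <;> norm_num
    · intro i i'; fin_cases i <;> fin_cases i' <;>
        first
          | exact hP9G _ _ (hPk j) (hPk j)
          | exact hP9G _ _ (hPk j) (hPk j')
          | exact hP9G _ _ (hPk j') (hPk j)
          | exact hP9G _ _ (hPk j') (hPk j')
    · intro i i'; fin_cases i <;> fin_cases i' <;> exact hP9G _ _ hPj₀ hPj₀
    · intro i jj; fin_cases i <;> fin_cases jj <;> norm_num <;> linarith
  have hDexclM : ∀ (j j' : Fin K), j ≠ j' → ∀ y : unitInterval,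
      ¬(G (k j) y - G j₀ y < -1 ∧ G (k j') y - G j₀ y < -1) := by
    rintro j j' hnejj y ⟨h1, h2⟩
    refine hDn j j' hnejj (pat_of_point_mirror G hGdense _ _ _ _ 42 ?_ ?_ ?_ ?_ y ?_)
    · intro i; fin_cases i <;> norm_num
    · intro i; fin_cases i <;> norm_num
    · intro i i'; fin_cases i <;> fin_cases i' <;>
        first
          | exact hP9G _ _ (hPk j) (hPk j)
          | exact hP9G _ _ (hPk j) (hPk j')
          | exact hP9G _ _ (hPk j') (hPk j)
          | exact hP9G _ _ (hPk j') (hPk j')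
    · intro i i'; fin_cases i <;> fin_cases i' <;> exact hP9G _ _ hPj₀ hPj₀
    · intro i jj; fin_cases i <;> fin_cases jj <;> norm_num <;> linarith
  -- ### extracting K distinct crossings of the transported pair
  have hcross : ∀ j : Fin K, ∃ cx : unitInterval,
      ((G i₀ cx - G j₀ cx = 1 ∧ 2 ≤ G (k j) cx - G j₀ cx) ∨
       (G i₀ cx - G j₀ cx = -1 ∧ G (k j) cx - G j₀ cx ≤ -2)) := by
    intro j
    rcases hApt j with ⟨α, hα1, hα2⟩ | ⟨α, hα1, hα2⟩
    · -- positive orientation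
      have hD1c : Continuous (fun t : ℝ => G i₀ (projIcc (0:ℝ) 1 zero_le_one t) -
          G j₀ (projIcc (0:ℝ) 1 zero_le_one t)) :=
        ((map_continuous (G i₀)).comp continuous_projIcc).sub
          ((map_continuous (G j₀)).comp continuous_projIcc)
      have hE1c : Continuous (fun t : ℝ => G (k j) (projIcc (0:ℝ) 1 zero_le_one t) -
          G j₀ (projIcc (0:ℝ) 1 zero_le_one t)) :=
        ((map_continuous (G (k j))).comp continuous_projIcc).sub
          ((map_continuous (G j₀)).comp continuous_projIcc)
      have hcorr : ∀ t ∈ Icc (0:ℝ) 1,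
          ¬(1 < G i₀ (projIcc (0:ℝ) 1 zero_le_one t) - G j₀ (projIcc (0:ℝ) 1 zero_le_one t) ∧
            1 < G (k j) (projIcc (0:ℝ) 1 zero_le_one t) - G j₀ (projIcc (0:ℝ) 1 zero_le_one t) ∧
            G (k j) (projIcc (0:ℝ) 1 zero_le_one t) - G j₀ (projIcc (0:ℝ) 1 zero_le_one t) < 3 ∧
            -1 < (G i₀ (projIcc (0:ℝ) 1 zero_le_one t) - G j₀ (projIcc (0:ℝ) 1 zero_le_one t)) -
              (G (k j) (projIcc (0:ℝ) 1 zero_le_one t) -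
                G j₀ (projIcc (0:ℝ) 1 zero_le_one t))) := by
        intro t ht hcon
        exact hCexcl j (projIcc (0:ℝ) 1 zero_le_one t) hcon
      have hB' : (∃ β ∈ Icc (0:ℝ) 1,
            G i₀ (projIcc (0:ℝ) 1 zero_le_one β) - G j₀ (projIcc (0:ℝ) 1 zero_le_one β) < 1) ∨
          (∃ γ ∈ Icc (0:ℝ) 1,
            G (k j) (projIcc (0:ℝ) 1 zero_le_one γ) -
              G j₀ (projIcc (0:ℝ) 1 zero_le_one γ) < -2) := by
        rcases hBpt j with ⟨β, hβ1, hβ2⟩ | ⟨β, hβ1, hβ2⟩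
        · left
          refine ⟨(β:ℝ), β.2, ?_⟩
          rw [projIcc_val zero_le_one β]
          exact hβ1
        · right
          refine ⟨(β:ℝ), β.2, ?_⟩
          rw [projIcc_val zero_le_one β]
          exact hβ2
      obtain ⟨c, hcmem, hc1, hc2⟩ := find_crossing hD1c hE1c hcorr
        (show (α:ℝ) ∈ Icc (0:ℝ) 1 from α.2)
        (by rw [projIcc_val zero_le_one α]; exact hα1)
        (by rw [projIcc_val zero_le_one α]; exact hα2) hB'
      rw [projIcc_of_mem zero_le_one hcmem] at hc1 hc2
      exact ⟨⟨c, hcmem⟩, Or.inl ⟨hc1, hc2⟩⟩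
    · -- negative orientation
      have hD1c : Continuous (fun t : ℝ => G j₀ (projIcc (0:ℝ) 1 zero_le_one t) -
          G i₀ (projIcc (0:ℝ) 1 zero_le_one t)) :=
        ((map_continuous (G j₀)).comp continuous_projIcc).sub
          ((map_continuous (G i₀)).comp continuous_projIcc)
      have hE1c : Continuous (fun t : ℝ => G j₀ (projIcc (0:ℝ) 1 zero_le_one t) -
          G (k j) (projIcc (0:ℝ) 1 zero_le_one t)) :=
        ((map_continuous (G j₀)).comp continuous_projIcc).sub
          ((map_continuous (G (k j))).comp continuous_projIcc)
      have hcorr : ∀ t ∈ Icc (0:ℝ) 1,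
          ¬(1 < G j₀ (projIcc (0:ℝ) 1 zero_le_one t) - G i₀ (projIcc (0:ℝ) 1 zero_le_one t) ∧
            1 < G j₀ (projIcc (0:ℝ) 1 zero_le_one t) - G (k j) (projIcc (0:ℝ) 1 zero_le_one t) ∧
            G j₀ (projIcc (0:ℝ) 1 zero_le_one t) - G (k j) (projIcc (0:ℝ) 1 zero_le_one t) < 3 ∧
            -1 < (G j₀ (projIcc (0:ℝ) 1 zero_le_one t) - G i₀ (projIcc (0:ℝ) 1 zero_le_one t)) -
              (G j₀ (projIcc (0:ℝ) 1 zero_le_one t) -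
                G (k j) (projIcc (0:ℝ) 1 zero_le_one t))) := by
        intro t ht hcon
        exact hCexclM j (projIcc (0:ℝ) 1 zero_le_one t) hcon
      have hB' : (∃ β ∈ Icc (0:ℝ) 1,
            G j₀ (projIcc (0:ℝ) 1 zero_le_one β) - G i₀ (projIcc (0:ℝ) 1 zero_le_one β) < 1) ∨
          (∃ γ ∈ Icc (0:ℝ) 1,
            G j₀ (projIcc (0:ℝ) 1 zero_le_one γ) -
              G (k j) (projIcc (0:ℝ) 1 zero_le_one γ) < -2) := by
        rcases hBpt j with ⟨β, hβ1, hβ2⟩ | ⟨β, hβ1, hβ2⟩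
        · right
          refine ⟨(β:ℝ), β.2, ?_⟩
          rw [projIcc_val zero_le_one β]
          linarith
        · left
          refine ⟨(β:ℝ), β.2, ?_⟩
          rw [projIcc_val zero_le_one β]
          linarith
      obtain ⟨c, hcmem, hc1, hc2⟩ := find_crossing hD1c hE1c hcorr
        (show (α:ℝ) ∈ Icc (0:ℝ) 1 from α.2)
        (by rw [projIcc_val zero_le_one α]; exact hα1)
        (by rw [projIcc_val zero_le_one α]; exact hα2) hB'
      rw [projIcc_of_mem zero_le_one hcmem] at hc1 hc2
      refine ⟨⟨c, hcmem⟩, Or.inr ⟨by linarith, by linarith⟩⟩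
  choose cx hcx using hcross
  have hmemcr : ∀ j, cx j ∈ hcrfin.toFinset := by
    intro j
    rw [Set.Finite.mem_toFinset]
    have : Int.fract (G i₀ (cx j)) = Int.fract (G j₀ (cx j)) := by
      rcases hcx j with ⟨h1, -⟩ | ⟨h1, -⟩
      · have h : G i₀ (cx j) = G j₀ (cx j) + ((1:ℤ):ℝ) := by push_cast; linarith
        rw [h, Int.fract_add_intCast]
      · have h : G i₀ (cx j) = G j₀ (cx j) + ((-1:ℤ):ℝ) := by push_cast; linarith
        rw [h, Int.fract_add_intCast]
    exact this
  have hinjcx : Function.Injective cx := by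
    intro j j' he
    by_contra hnejj
    rcases hcx j with ⟨hd1, he1⟩ | ⟨hd1, he1⟩ <;> rcases hcx j' with ⟨hd2, he2⟩ | ⟨hd2, he2⟩
    · exact hDexcl j j' hnejj (cx j) ⟨by linarith, by rw [he]; linarith⟩
    · rw [he] at hd1
      linarith
    · rw [he] at hd1
      linarith
    · exact hDexclM j j' hnejj (cx j) ⟨by linarith, by rw [he]; linarith⟩
  have hcard : K ≤ hcrfin.toFinset.card := by
    have h := Finset.card_le_card_of_injOn (s := (Finset.univ : Finset (Fin K))) cx
      (fun j _ => hmemcr j) hinjcx.injOn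
    simpa using h
  omega
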